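/- Let α, β, λ > 0 and let U, V, W be independent real-valued random variables with U ~ Beta(α+λ, β), 1/V ~ Beta(λ, α), and W ~ Beta(α, β). Set W' = U·(V−1)/(V−U). Then the law of the random variable W'/U is absolutely continuous with respect to Lebesgue measure on ℝ, with density g(x) = [x^{α−1}(1−x)^{λ−1} / (B(λ,α)·B(α+λ,β))] · ∫₀¹ (1−xu)^{−(α+λ)} u^{α+λ−1} (1−u)^{α+β−1} du for 0 < x < 1, and g(x) = 0 for x outside (0,1). -/

import Mathlib

open MeasureTheory ProbabilityTheory

/-- The Beta(a,b) probability measure on ℝ: supported on (0,1) with density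
`x ↦ x^(a-1) * (1-x)^(b-1) * Γ(a+b) / (Γ(a) * Γ(b))`. -/
noncomputable def betaMeasure (a b : ℝ) : Measure ℝ :=
  volume.withDensity fun x =>
    ENNReal.ofReal ((Set.Ioo (0 : ℝ) 1).indicator
      (fun x => x ^ (a - 1) * (1 - x) ^ (b - 1) * Real.Gamma (a + b) /
        (Real.Gamma a * Real.Gamma b)) x)

/-- The beta function `B(a,b) = Γ(a)Γ(b)/Γ(a+b)`. -/
noncomputable def betaFn (a b : ℝ) : ℝ := Real.Gamma a * Real.Gamma b / Real.Gamma (a + b)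


open Set Real
open scoped ENNReal

lemma betaIntegrand_integrableOn {a b : ℝ} (ha : 0 < a) (hb : 0 < b) :
    IntegrableOn (fun x : ℝ => x ^ (a - 1) * (1 - x) ^ (b - 1)) (Set.Ioo 0 1) := by
  have hC : IntervalIntegrable (fun x : ℝ =>
      (x : ℂ) ^ ((a : ℂ) - 1) * (1 - (x : ℂ)) ^ ((b : ℂ) - 1)) volume 0 1 :=
    Complex.betaIntegral_convergent (by simpa using ha) (by simpa using hb)
  have hIoc : IntegrableOn (fun x : ℝ =>
      (x : ℂ) ^ ((a : ℂ) - 1) * (1 - (x : ℂ)) ^ ((b : ℂ) - 1)) (Set.Ioc 0 1) :=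
    (intervalIntegrable_iff_integrableOn_Ioc_of_le zero_le_one).mp hC
  have hIoo : IntegrableOn (fun x : ℝ =>
      ‖(x : ℂ) ^ ((a : ℂ) - 1) * (1 - (x : ℂ)) ^ ((b : ℂ) - 1)‖) (Set.Ioo 0 1) :=
    (hIoc.mono_set Set.Ioo_subset_Ioc_self).norm
  refine hIoo.congr_fun (fun x hx => ?_) measurableSet_Ioo
  obtain ⟨hx0, hx1⟩ := hx
  beta_reduce
  rw [norm_mul]
  rw [Complex.norm_cpow_eq_rpow_re_of_pos hx0]
  have : (1 : ℂ) - (x : ℂ) = ((1 - x : ℝ) : ℂ) := by push_cast; ring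
  rw [this, Complex.norm_cpow_eq_rpow_re_of_pos (by linarith)]
  simp

lemma psi_mem {u t : ℝ} (hu : u ∈ Set.Ioo (0:ℝ) 1) (ht : t ∈ Set.Ioo (0:ℝ) 1) :
    (1 - t) / (1 - u * t) ∈ Set.Ioo (0:ℝ) 1 := by
  obtain ⟨hu0, hu1⟩ := hu; obtain ⟨ht0, ht1⟩ := ht
  have hA : 0 < 1 - u * t := by nlinarith
  constructor
  · exact div_pos (by linarith) hA
  · rw [div_lt_one hA]; nlinarith

lemma psi_invol {u t : ℝ} (hu : u ∈ Set.Ioo (0:ℝ) 1) (ht : t ∈ Set.Ioo (0:ℝ) 1) :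
    (1 - (1 - t) / (1 - u * t)) / (1 - u * ((1 - t) / (1 - u * t))) = t := by
  obtain ⟨hu0, hu1⟩ := hu; obtain ⟨ht0, ht1⟩ := ht
  have hA : 0 < 1 - u * t := by nlinarith
  have h1 : 1 - (1 - t) / (1 - u * t) = t * (1 - u) / (1 - u * t) := by
    rw [eq_div_iff hA.ne', sub_mul, div_mul_cancel₀ _ hA.ne']; ring
  have h2 : 1 - u * ((1 - t) / (1 - u * t)) = (1 - u) / (1 - u * t) := by
    field_simp; ring
  rw [h1, h2]
  have hne : (1:ℝ) - u ≠ 0 := by linarith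
  have hAne : (1:ℝ) - u * t ≠ 0 := ne_of_gt hA
  rw [div_div_div_cancel_right₀ hAne, mul_div_assoc, div_self hne, mul_one]

lemma cov_aux {u : ℝ} (hu : u ∈ Set.Ioo (0:ℝ) 1) (G : ℝ → ℝ≥0∞) :
    ∫⁻ x in Set.Ioo (0:ℝ) 1, G x
      = ∫⁻ t in Set.Ioo (0:ℝ) 1,
          ENNReal.ofReal ((1 - u) / (1 - u * t) ^ 2) * G ((1 - t) / (1 - u * t)) := by
  obtain ⟨hu0, hu1⟩ := hu
  set ψ : ℝ → ℝ := fun t => (1 - t) / (1 - u * t) with hψ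
  have hmem : ∀ t ∈ Set.Ioo (0:ℝ) 1, ψ t ∈ Set.Ioo (0:ℝ) 1 := fun t ht => psi_mem ⟨hu0, hu1⟩ ht
  have hinv : ∀ t ∈ Set.Ioo (0:ℝ) 1, ψ (ψ t) = t := fun t ht => psi_invol ⟨hu0, hu1⟩ ht
  have himg : ψ '' Set.Ioo 0 1 = Set.Ioo 0 1 := by
    apply Set.Subset.antisymm
    · rintro y ⟨t, ht, rfl⟩; exact hmem t ht
    · intro y hy; exact ⟨ψ y, hmem y hy, hinv y hy⟩
  have hinj : Set.InjOn ψ (Set.Ioo 0 1) := fun x hx y hy hxy => by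
    rw [← hinv x hx, ← hinv y hy, hxy]
  have hderiv : ∀ t ∈ Set.Ioo (0:ℝ) 1,
      HasDerivWithinAt ψ ((u - 1) / (1 - u * t) ^ 2) (Set.Ioo 0 1) t := by
    intro t ht
    obtain ⟨ht0, ht1⟩ := ht
    have hA : (1 : ℝ) - u * t ≠ 0 := by nlinarith
    have h1 : HasDerivAt (fun t : ℝ => 1 - t) (-1) t := by
      simpa using ((hasDerivAt_id t).const_sub 1)
    have h2 : HasDerivAt (fun t : ℝ => 1 - u * t) (-u) t := by
      simpa using (((hasDerivAt_id t).const_mul u).const_sub 1)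
    have := (h1.div h2 hA)
    have heq : (-1 * (1 - u * t) - (1 - t) * -u) / (1 - u * t) ^ 2
        = (u - 1) / (1 - u * t) ^ 2 := by ring_nf
    rw [heq] at this
    exact this.hasDerivWithinAt
  have key := lintegral_image_eq_lintegral_abs_det_fderiv_mul volume measurableSet_Ioo
    (f' := fun t => (1 : ℝ →L[ℝ] ℝ).smulRight ((u - 1) / (1 - u * t) ^ 2))
    (fun t ht => (hderiv t ht).hasFDerivWithinAt) hinj G
  rw [himg] at key
  rw [key]
  refine setLIntegral_congr_fun measurableSet_Ioo (fun t ht => ?_)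
  obtain ⟨ht0, ht1⟩ := ht
  have hA : (0:ℝ) < 1 - u * t := by nlinarith
  rw [ContinuousLinearMap.smulRight_one_eq_toSpanSingleton, ContinuousLinearMap.det_toSpanSingleton]
  congr 1
  rw [abs_div, abs_of_neg (by nlinarith : u - 1 < 0),
    abs_of_pos (by positivity : (0:ℝ) < (1 - u*t)^2)]
  ring

lemma density_algebra {α β lam u t : ℝ} (hα : 0 < α) (hβ : 0 < β) (hlam : 0 < lam)
    (hu : u ∈ Set.Ioo (0:ℝ) 1) (ht : t ∈ Set.Ioo (0:ℝ) 1) :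
    (u ^ (α + lam - 1) * (1 - u) ^ (β - 1) * Real.Gamma (α + lam + β) /
        (Real.Gamma (α + lam) * Real.Gamma β)) *
      ((1 - u) / (1 - u * t) ^ 2 *
        (((1 - t) / (1 - u * t)) ^ (lam - 1) * (1 - (1 - t) / (1 - u * t)) ^ (α - 1) *
          Real.Gamma (lam + α) / (Real.Gamma lam * Real.Gamma α)))
    = t ^ (α - 1) * (1 - t) ^ (lam - 1) / (betaFn lam α * betaFn (α + lam) β) *
        ((1 - t * u) ^ (-(α + lam)) * u ^ (α + lam - 1) * (1 - u) ^ (α + β - 1)) := by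
  obtain ⟨hu0, hu1⟩ := hu; obtain ⟨ht0, ht1⟩ := ht
  have hA : (0:ℝ) < 1 - u * t := by nlinarith
  have h1u : (0:ℝ) < 1 - u := by linarith
  have h1t : (0:ℝ) < 1 - t := by linarith
  have h1 : 1 - (1 - t) / (1 - u * t) = t * (1 - u) / (1 - u * t) := by
    rw [eq_div_iff hA.ne', sub_mul, div_mul_cancel₀ _ hA.ne']; ring
  rw [h1, show (1:ℝ) - t * u = 1 - u * t by ring]
  rw [div_rpow h1t.le hA.le, div_rpow (by positivity) hA.le, mul_rpow ht0.le h1u.le]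
  rw [show α + β - 1 = (β - 1) + ((α - 1) + 1) by ring, rpow_add h1u, rpow_add h1u, rpow_one]
  rw [show -(α + lam) = -((lam - 1) + ((α - 1) + 2)) by ring, rpow_neg hA.le,
    rpow_add hA, rpow_add hA, show ((2:ℝ)) = ((2:ℕ):ℝ) by norm_num, rpow_natCast]
  have hG1 : Real.Gamma (α + lam) ≠ 0 := (Real.Gamma_pos_of_pos (by linarith)).ne'
  have hG2 : Real.Gamma β ≠ 0 := (Real.Gamma_pos_of_pos hβ).ne'
  have hG3 : Real.Gamma lam ≠ 0 := (Real.Gamma_pos_of_pos hlam).ne'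
  have hG4 : Real.Gamma α ≠ 0 := (Real.Gamma_pos_of_pos hα).ne'
  have hG5 : Real.Gamma (α + lam + β) ≠ 0 := (Real.Gamma_pos_of_pos (by linarith)).ne'
  have hG6 : Real.Gamma (lam + α) ≠ 0 := (Real.Gamma_pos_of_pos (by linarith)).ne'
  have hp1 : (1 - u * t) ^ (lam - 1) ≠ 0 := (rpow_pos_of_pos hA _).ne'
  have hp2 : (1 - u * t) ^ (α - 1) ≠ 0 := (rpow_pos_of_pos hA _).ne'
  have hp3 : ((1 - u * t) ^ (2:ℕ)) ≠ 0 := pow_ne_zero _ hA.ne'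
  rw [betaFn, betaFn]
  field_simp

lemma hfun_integrableOn {α β lam t : ℝ} (hα : 0 < α) (hβ : 0 < β) (hlam : 0 < lam)
    (ht : t ∈ Set.Ioo (0:ℝ) 1) :
    IntegrableOn (fun u : ℝ =>
      (1 - t * u) ^ (-(α + lam)) * u ^ (α + lam - 1) * (1 - u) ^ (α + β - 1))
      (Set.Ioo 0 1) := by
  obtain ⟨ht0, ht1⟩ := ht
  have hbase := betaIntegrand_integrableOn (a := α + lam) (b := α + β)
    (by linarith) (by linarith)
  have hint : IntegrableOn (fun u : ℝ =>
      (1 - t) ^ (-(α + lam)) * (u ^ (α + lam - 1) * (1 - u) ^ (α + β - 1)))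
      (Set.Ioo 0 1) := hbase.const_mul _
  refine hint.mono' ?_ ?_
  · apply Measurable.aestronglyMeasurable
    apply Measurable.mul
    apply Measurable.mul
    · exact (measurable_const.sub (measurable_id.const_mul t)).pow measurable_const
    · exact measurable_id.pow measurable_const
    · exact (measurable_const.sub measurable_id).pow measurable_const
  · refine (ae_restrict_iff' measurableSet_Ioo).mpr (Filter.Eventually.of_forall ?_)
    intro u hu
    obtain ⟨hu0, hu1⟩ := hu
    have h1t : (0:ℝ) < 1 - t := by linarith
    have hA : (0:ℝ) < 1 - t * u := by nlinarith
    have hle : (1 - t * u) ^ (-(α + lam)) ≤ (1 - t) ^ (-(α + lam)) := by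
      apply rpow_le_rpow_of_nonpos h1t (by nlinarith) (by linarith)
    rw [norm_mul, norm_mul]
    rw [norm_of_nonneg (rpow_nonneg hA.le _), norm_of_nonneg (rpow_nonneg hu0.le _),
      norm_of_nonneg (rpow_nonneg (by linarith : (0:ℝ) ≤ 1 - u) _)]
    rw [mul_assoc]
    exact mul_le_mul_of_nonneg_right hle
      (mul_nonneg (rpow_nonneg hu0.le _) (rpow_nonneg (by linarith) _))

/-- The map `(u, v⁻¹-space) → ℝ`. -/
noncomputable def phiMap : ℝ × ℝ → ℝ := fun p => p.1 * (p.2⁻¹ - 1) / (p.2⁻¹ - p.1) / p.1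

lemma phiMap_measurable : Measurable phiMap := by
  unfold phiMap
  exact ((measurable_fst.mul (measurable_snd.inv.sub measurable_const)).div
    (measurable_snd.inv.sub measurable_fst)).div measurable_fst

lemma phi_eq {u x : ℝ} (hu : u ∈ Set.Ioo (0:ℝ) 1) (hx : x ∈ Set.Ioo (0:ℝ) 1) :
    phiMap (u, x) = (1 - x) / (1 - u * x) := by
  obtain ⟨hu0, hu1⟩ := hu; obtain ⟨hx0, hx1⟩ := hx
  have hA : (0:ℝ) < 1 - u * x := by nlinarith
  have hxi : (1:ℝ) < x⁻¹ := (one_lt_inv_iff₀).mpr ⟨hx0, hx1⟩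
  have hden : x⁻¹ - u ≠ 0 := by nlinarith
  simp only [phiMap]
  rw [mul_div_assoc, mul_div_cancel_left₀ _ hu0.ne']
  rw [div_eq_div_iff hden hA.ne']
  have h : x⁻¹ * x = 1 := inv_mul_cancel₀ hx0.ne'
  nlinarith [h]

/-- The fiber density. -/
noncomputable def Kfun (α β lam u t : ℝ) : ℝ :=
  t ^ (α - 1) * (1 - t) ^ (lam - 1) / (betaFn lam α * betaFn (α + lam) β) *
    ((1 - t * u) ^ (-(α + lam)) * u ^ (α + lam - 1) * (1 - u) ^ (α + β - 1))

lemma Kfun_nonneg {α β lam : ℝ} (hα : 0 < α) (hβ : 0 < β) (hlam : 0 < lam)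
    {u t : ℝ} (hu : u ∈ Set.Ioo (0:ℝ) 1) (ht : t ∈ Set.Ioo (0:ℝ) 1) :
    0 ≤ Kfun α β lam u t := by
  obtain ⟨hu0, hu1⟩ := hu; obtain ⟨ht0, ht1⟩ := ht
  have hA : (0:ℝ) < 1 - t * u := by nlinarith
  have hB1 : 0 < betaFn lam α := by
    rw [betaFn]
    exact div_pos (mul_pos (Real.Gamma_pos_of_pos hlam) (Real.Gamma_pos_of_pos hα))
      (Real.Gamma_pos_of_pos (by linarith))
  have hB2 : 0 < betaFn (α + lam) β := by
    rw [betaFn]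
    exact div_pos (mul_pos (Real.Gamma_pos_of_pos (by linarith)) (Real.Gamma_pos_of_pos hβ))
      (Real.Gamma_pos_of_pos (by linarith))
  have h1 : 0 ≤ t ^ (α - 1) * (1 - t) ^ (lam - 1) / (betaFn lam α * betaFn (α + lam) β) := by
    apply div_nonneg _ (le_of_lt (mul_pos hB1 hB2))
    exact mul_nonneg (rpow_nonneg ht0.le _) (rpow_nonneg (by linarith) _)
  exact mul_nonneg h1 (mul_nonneg (mul_nonneg (rpow_nonneg hA.le _)
    (rpow_nonneg hu0.le _)) (rpow_nonneg (by linarith) _))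

lemma Kfun_measurable (α β lam : ℝ) : Measurable (Function.uncurry (Kfun α β lam)) := by
  unfold Function.uncurry Kfun
  apply Measurable.mul
  · exact ((((measurable_snd.pow measurable_const)).mul
      ((measurable_const.sub measurable_snd).pow measurable_const)).div measurable_const)
  · exact (((measurable_const.sub (measurable_snd.mul measurable_fst)).pow
      measurable_const).mul (measurable_fst.pow measurable_const)).mul
      ((measurable_const.sub measurable_fst).pow measurable_const)

lemma lintegral_Kfun {α β lam t : ℝ} (hα : 0 < α) (hβ : 0 < β) (hlam : 0 < lam)
    (ht : t ∈ Set.Ioo (0:ℝ) 1) :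
    ∫⁻ u in Set.Ioo (0:ℝ) 1, ENNReal.ofReal (Kfun α β lam u t)
      = ENNReal.ofReal (t ^ (α - 1) * (1 - t) ^ (lam - 1) /
          (betaFn lam α * betaFn (α + lam) β) *
          ∫ u in (0:ℝ)..1,
            (1 - t * u) ^ (-(α + lam)) * u ^ (α + lam - 1) * (1 - u) ^ (α + β - 1)) := by
  have hint : IntegrableOn (fun u => Kfun α β lam u t) (Set.Ioo 0 1) :=
    (hfun_integrableOn hα hβ hlam ht).const_mul _
  have hnn : 0 ≤ᵐ[volume.restrict (Set.Ioo (0:ℝ) 1)] fun u => Kfun α β lam u t := by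
    refine (ae_restrict_iff' measurableSet_Ioo).mpr (Filter.Eventually.of_forall ?_)
    intro u hu
    exact Kfun_nonneg hα hβ hlam hu ht
  rw [← ofReal_integral_eq_lintegral_ofReal hint hnn]
  congr 1
  rw [intervalIntegral.integral_of_le zero_le_one, integral_Ioc_eq_integral_Ioo]
  unfold Kfun
  rw [← integral_const_mul]

/-- Final integrand of the double integral. -/
noncomputable def Gfun (α β lam : ℝ) (s : Set ℝ) (u t : ℝ) : ℝ≥0∞ :=
  (Set.Ioo (0:ℝ) 1).indicator 1 u *
    ((Set.Ioo (0:ℝ) 1).indicator 1 t *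
      (s.indicator 1 t * ENNReal.ofReal (Kfun α β lam u t)))

lemma Gfun_measurable (α β lam : ℝ) {s : Set ℝ} (hs : MeasurableSet s) :
    Measurable (Function.uncurry (Gfun α β lam s)) := by
  unfold Function.uncurry Gfun
  refine Measurable.mul ?_ (Measurable.mul ?_ (Measurable.mul ?_ ?_))
  · exact (measurable_one.indicator measurableSet_Ioo).comp measurable_fst
  · exact (measurable_one.indicator measurableSet_Ioo).comp measurable_snd
  · exact (measurable_one.indicator hs).comp measurable_snd
  · exact ENNReal.measurable_ofReal.comp (Kfun_measurable α β lam)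


open Set Real
open scoped ENNReal

instance betaMeasure.instSFinite (a b : ℝ) : SFinite (_root_.betaMeasure a b) := by
  unfold _root_.betaMeasure; infer_instance

lemma per_u {α β lam : ℝ} (hα : 0 < α) (hβ : 0 < β) (hlam : 0 < lam)
    {s : Set ℝ} (hs : MeasurableSet s) (u : ℝ) :
    ENNReal.ofReal ((Set.Ioo (0:ℝ) 1).indicator
        (fun u => u ^ (α + lam - 1) * (1 - u) ^ (β - 1) * Real.Gamma (α + lam + β) /
          (Real.Gamma (α + lam) * Real.Gamma β)) u) *
      _root_.betaMeasure lam α (Prod.mk u ⁻¹' (phiMap ⁻¹' s))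
    = ∫⁻ t, Gfun α β lam s u t := by
  by_cases hu : u ∈ Set.Ioo (0:ℝ) 1
  · obtain ⟨hu0, hu1⟩ := hu
    have hu' : u ∈ Set.Ioo (0:ℝ) 1 := ⟨hu0, hu1⟩
    have hsl : MeasurableSet (Prod.mk u ⁻¹' (phiMap ⁻¹' s)) :=
      measurable_prodMk_left (phiMap_measurable hs)
    rw [Set.indicator_of_mem hu']
    rw [_root_.betaMeasure, withDensity_apply _ hsl, ← lintegral_indicator hsl]
    have hstep1 : (fun x => (Prod.mk u ⁻¹' (phiMap ⁻¹' s)).indicator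
          (fun x => ENNReal.ofReal ((Set.Ioo (0:ℝ) 1).indicator
            (fun x => x ^ (lam - 1) * (1 - x) ^ (α - 1) * Real.Gamma (lam + α) /
              (Real.Gamma lam * Real.Gamma α)) x)) x)
        = fun x => (Set.Ioo (0:ℝ) 1).indicator
            (fun x => ENNReal.ofReal (x ^ (lam - 1) * (1 - x) ^ (α - 1) *
              Real.Gamma (lam + α) / (Real.Gamma lam * Real.Gamma α)) *
              s.indicator 1 (phiMap (u, x))) x := by
      funext x
      by_cases hx1 : x ∈ Set.Ioo (0:ℝ) 1 <;> by_cases hx2 : phiMap (u, x) ∈ s <;>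
        (rw [Set.mem_Ioo] at hx1; simp [Set.indicator_apply, Set.mem_Ioo, hx1, hx2])
    rw [hstep1, lintegral_indicator measurableSet_Ioo]
    rw [setLIntegral_congr_fun measurableSet_Ioo
      (fun x hx => by rw [phi_eq hu' hx])]
    rw [cov_aux hu' (fun x => ENNReal.ofReal (x ^ (lam - 1) * (1 - x) ^ (α - 1) *
      Real.Gamma (lam + α) / (Real.Gamma lam * Real.Gamma α)) *
      s.indicator 1 ((1 - x) / (1 - u * x)))]
    rw [← lintegral_const_mul' _ _ ENNReal.ofReal_ne_top]
    have hG : (fun t => Gfun α β lam s u t)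
        = fun t => (Set.Ioo (0:ℝ) 1).indicator
            (fun t => s.indicator 1 t * ENNReal.ofReal (Kfun α β lam u t)) t := by
      funext t
      by_cases ht1 : t ∈ Set.Ioo (0:ℝ) 1 <;> simp [Gfun, ht1, hu']
    rw [hG, lintegral_indicator measurableSet_Ioo]
    refine setLIntegral_congr_fun measurableSet_Ioo
      (fun t ht => ?_)
    obtain ⟨ht0, ht1⟩ := ht
    have ht' : t ∈ Set.Ioo (0:ℝ) 1 := ⟨ht0, ht1⟩
    have hA : (0:ℝ) < 1 - u * t := by nlinarith
    rw [psi_invol hu' ht']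
    have hj0 : (0:ℝ) ≤ (1 - u) / (1 - u * t) ^ 2 :=
      div_nonneg (by linarith) (sq_nonneg _)
    have hbU0 : (0:ℝ) ≤ u ^ (α + lam - 1) * (1 - u) ^ (β - 1) * Real.Gamma (α + lam + β) /
        (Real.Gamma (α + lam) * Real.Gamma β) := by
      apply div_nonneg _ (le_of_lt (mul_pos (Real.Gamma_pos_of_pos (by linarith))
        (Real.Gamma_pos_of_pos hβ)))
      exact mul_nonneg (mul_nonneg (rpow_nonneg hu0.le _) (rpow_nonneg (by linarith) _))
        (le_of_lt (Real.Gamma_pos_of_pos (by linarith)))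
    rw [show ENNReal.ofReal (u ^ (α + lam - 1) * (1 - u) ^ (β - 1) * Real.Gamma (α + lam + β) /
          (Real.Gamma (α + lam) * Real.Gamma β)) *
        (ENNReal.ofReal ((1 - u) / (1 - u * t) ^ 2) *
          (ENNReal.ofReal (((1 - t) / (1 - u * t)) ^ (lam - 1) *
            (1 - (1 - t) / (1 - u * t)) ^ (α - 1) * Real.Gamma (lam + α) /
            (Real.Gamma lam * Real.Gamma α)) * s.indicator 1 t))
      = (ENNReal.ofReal (u ^ (α + lam - 1) * (1 - u) ^ (β - 1) * Real.Gamma (α + lam + β) /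
          (Real.Gamma (α + lam) * Real.Gamma β)) *
        (ENNReal.ofReal ((1 - u) / (1 - u * t) ^ 2) *
          ENNReal.ofReal (((1 - t) / (1 - u * t)) ^ (lam - 1) *
            (1 - (1 - t) / (1 - u * t)) ^ (α - 1) * Real.Gamma (lam + α) /
            (Real.Gamma lam * Real.Gamma α)))) * s.indicator 1 t by ring]
    rw [← ENNReal.ofReal_mul hj0, ← ENNReal.ofReal_mul hbU0]
    rw [show (u ^ (α + lam - 1) * (1 - u) ^ (β - 1) * Real.Gamma (α + lam + β) /
          (Real.Gamma (α + lam) * Real.Gamma β)) *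
        ((1 - u) / (1 - u * t) ^ 2 *
          (((1 - t) / (1 - u * t)) ^ (lam - 1) * (1 - (1 - t) / (1 - u * t)) ^ (α - 1) *
            Real.Gamma (lam + α) / (Real.Gamma lam * Real.Gamma α)))
        = Kfun α β lam u t from density_algebra hα hβ hlam hu' ht']
    ring
  · simp only [Set.indicator_of_notMem hu, ENNReal.ofReal_zero, zero_mul]
    symm
    have : (fun t => Gfun α β lam s u t) = fun _ => 0 := by
      funext t
      simp [Gfun, Set.indicator_of_notMem hu]
    rw [this, lintegral_zero]

lemma per_t {α β lam : ℝ} (hα : 0 < α) (hβ : 0 < β) (hlam : 0 < lam)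
    {s : Set ℝ} (hs : MeasurableSet s) (t : ℝ) :
    ∫⁻ u, Gfun α β lam s u t
      = s.indicator (fun t => ENNReal.ofReal ((Set.Ioo (0:ℝ) 1).indicator
          (fun x => x ^ (α - 1) * (1 - x) ^ (lam - 1) /
              (betaFn lam α * betaFn (α + lam) β) *
            ∫ u in (0:ℝ)..1,
              (1 - x * u) ^ (-(α + lam)) * u ^ (α + lam - 1) * (1 - u) ^ (α + β - 1)) t)) t := by
  by_cases hts : t ∈ s
  · by_cases htI : t ∈ Set.Ioo (0:ℝ) 1
    · have hGt : (fun u => Gfun α β lam s u t)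
          = fun u => (Set.Ioo (0:ℝ) 1).indicator
              (fun u => ENNReal.ofReal (Kfun α β lam u t)) u := by
        funext u
        by_cases huI : u ∈ Set.Ioo (0:ℝ) 1 <;> simp [Gfun, huI, htI, hts]
      rw [hGt, lintegral_indicator measurableSet_Ioo, lintegral_Kfun hα hβ hlam htI]
      rw [Set.indicator_of_mem hts, Set.indicator_of_mem htI]
    · have hGt : (fun u => Gfun α β lam s u t) = fun _ => 0 := by
        funext u; simp [Gfun, Set.indicator_of_notMem htI]
      rw [hGt, lintegral_zero, Set.indicator_of_mem hts, Set.indicator_of_notMem htI,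
        ENNReal.ofReal_zero]
  · have hGt : (fun u => Gfun α β lam s u t) = fun _ => 0 := by
      funext u; simp [Gfun, Set.indicator_of_notMem hts]
    rw [hGt, lintegral_zero, Set.indicator_of_notMem hts]



/-- Proposition `pr:hypgeom`, case (a): if `U ~ Beta(α+λ, β)`, `1/V ~ Beta(λ, α)`,
`W ~ Beta(α, β)` are independent and `W' = U·(V−1)/(V−U)`, then `W'/U` has law
absolutely continuous w.r.t. Lebesgue measure, with density
`g(x) = x^(α−1)(1−x)^(λ−1) / (B(λ,α)·B(α+λ,β)) · ∫₀¹ (1−xu)^(−(α+λ)) u^(α+λ−1) (1−u)^(α+β−1) du`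
on `(0,1)`, and `0` elsewhere. -/
theorem density_of_doob_transition_a
    {Ω : Type*} [MeasurableSpace Ω] (μ : Measure Ω) [IsProbabilityMeasure μ]
    (α β lam : ℝ) (hα : 0 < α) (hβ : 0 < β) (hlam : 0 < lam)
    (U V W : Ω → ℝ) (hU : Measurable U) (hV : Measurable V) (hW : Measurable W)
    (hindep : iIndepFun ![U, V, W] μ)
    (hUlaw : μ.map U = _root_.betaMeasure (α + lam) β)
    (hVlaw : μ.map (fun ω => (V ω)⁻¹) = _root_.betaMeasure lam α)
    (hWlaw : μ.map W = _root_.betaMeasure α β) :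
    μ.map (fun ω => (U ω * (V ω - 1) / (V ω - U ω)) / U ω)
      = volume.withDensity fun x =>
          ENNReal.ofReal ((Set.Ioo (0 : ℝ) 1).indicator
            (fun x => x ^ (α - 1) * (1 - x) ^ (lam - 1) / (betaFn lam α * betaFn (α + lam) β) *
              ∫ u in (0 : ℝ)..1,
                (1 - x * u) ^ (-(α + lam)) * u ^ (α + lam - 1) * (1 - u) ^ (α + β - 1)) x) := by
  have hX : Measurable fun ω => (V ω)⁻¹ := hV.inv
  have hUV : IndepFun U V μ := by
    have h := hindep.indepFun (show (0 : Fin 3) ≠ 1 by decide)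
    simpa using h
  have hUX : IndepFun U (fun ω => (V ω)⁻¹) μ := by
    have h := hUV.comp measurable_id measurable_inv
    simpa [Function.comp_def] using h
  have hmap : μ.map (fun ω => (U ω, (V ω)⁻¹))
      = (_root_.betaMeasure (α + lam) β).prod (_root_.betaMeasure lam α) := by
    rw [← hUlaw, ← hVlaw]
    exact (indepFun_iff_map_prod_eq_prod_map_map hU.aemeasurable hX.aemeasurable).mp hUX
  have hcomp : (fun ω => (U ω * (V ω - 1) / (V ω - U ω)) / U ω)
      = phiMap ∘ (fun ω => (U ω, (V ω)⁻¹)) := by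
    funext ω
    simp only [phiMap, Function.comp_apply, inv_inv]
  rw [hcomp, ← Measure.map_map phiMap_measurable (hU.prodMk hX), hmap]
  ext s hs
  rw [Measure.map_apply phiMap_measurable hs, withDensity_apply _ hs]
  have hD1 : Measurable (fun u : ℝ => ENNReal.ofReal ((Set.Ioo (0:ℝ) 1).indicator
      (fun u => u ^ (α + lam - 1) * (1 - u) ^ (β - 1) * Real.Gamma (α + lam + β) /
        (Real.Gamma (α + lam) * Real.Gamma β)) u)) := by
    apply Measurable.ennreal_ofReal
    apply Measurable.indicator _ measurableSet_Ioo
    exact (((measurable_id.pow measurable_const).mul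
      ((measurable_const.sub measurable_id).pow measurable_const)).mul
      measurable_const).div measurable_const
  have hF : Measurable fun u : ℝ => _root_.betaMeasure lam α (Prod.mk u ⁻¹' (phiMap ⁻¹' s)) :=
    measurable_measure_prodMk_left (phiMap_measurable hs)
  calc (_root_.betaMeasure (α + lam) β).prod (_root_.betaMeasure lam α) (phiMap ⁻¹' s)
      = ∫⁻ u, _root_.betaMeasure lam α (Prod.mk u ⁻¹' (phiMap ⁻¹' s)) ∂(_root_.betaMeasure (α + lam) β) :=
        Measure.prod_apply (phiMap_measurable hs)
    _ = ∫⁻ u, ENNReal.ofReal ((Set.Ioo (0:ℝ) 1).indicator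
          (fun u => u ^ (α + lam - 1) * (1 - u) ^ (β - 1) * Real.Gamma (α + lam + β) /
            (Real.Gamma (α + lam) * Real.Gamma β)) u) *
          _root_.betaMeasure lam α (Prod.mk u ⁻¹' (phiMap ⁻¹' s)) ∂volume :=
        lintegral_withDensity_eq_lintegral_mul volume hD1 hF
    _ = ∫⁻ u, ∫⁻ t, Gfun α β lam s u t ∂volume ∂volume :=
        lintegral_congr (per_u hα hβ hlam hs)
    _ = ∫⁻ t, ∫⁻ u, Gfun α β lam s u t ∂volume ∂volume :=
        lintegral_lintegral_swap (Gfun_measurable α β lam hs).aemeasurable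
    _ = ∫⁻ t, s.indicator (fun t => ENNReal.ofReal ((Set.Ioo (0:ℝ) 1).indicator
          (fun x => x ^ (α - 1) * (1 - x) ^ (lam - 1) /
              (betaFn lam α * betaFn (α + lam) β) *
            ∫ u in (0:ℝ)..1,
              (1 - x * u) ^ (-(α + lam)) * u ^ (α + lam - 1) * (1 - u) ^ (α + β - 1)) t)) t
          ∂volume := lintegral_congr (per_t hα hβ hlam hs)
    _ = ∫⁻ t in s, ENNReal.ofReal ((Set.Ioo (0:ℝ) 1).indicator
          (fun x => x ^ (α - 1) * (1 - x) ^ (lam - 1) /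
              (betaFn lam α * betaFn (α + lam) β) *
            ∫ u in (0:ℝ)..1,
              (1 - x * u) ^ (-(α + lam)) * u ^ (α + lam - 1) * (1 - u) ^ (α + β - 1)) t)
          ∂volume := lintegral_indicator hs _
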